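/- An element g ∈ SL(2,ℂ) lies in A·SU(2) (with A the positive diagonal subgroup) if and only if for every X in the Lie algebra su(2), the derivative at t = 0 of the Iwasawa A-projection t ↦ A(exp(tX)·g) vanishes. -/

import Mathlib

noncomputable section

/-- `a(t) = diag(e^{t/2}, e^{-t/2})`. -/
def Ac (t : ℝ) : Matrix (Fin 2) (Fin 2) ℂ :=
  !![(Real.exp (t/2) : ℂ), 0; 0, (Real.exp (-(t/2)) : ℂ)]

/-- SU(2) as a set of matrices. -/
def SU2 : Set (Matrix (Fin 2) (Fin 2) ℂ) := {k | k * k.conjTranspose = 1 ∧ k.det = 1}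

/-- The Iwasawa A-projection of `g ∈ SL(2,ℂ)` (identified with a real number):
`A(g) = −log(|c|² + |d|²)` where `(c, d)` is the bottom row of `g`. -/
def IwaA (g : Matrix (Fin 2) (Fin 2) ℂ) : ℝ :=
  -Real.log (Complex.normSq (g 1 0) + Complex.normSq (g 1 1))

section Aux

open Matrix

attribute [local instance] Matrix.linftyOpNormedRing Matrix.linftyOpNormedAlgebra

lemma entry_hasDerivAt (X g : Matrix (Fin 2) (Fin 2) ℂ) (i j : Fin 2) :
    HasDerivAt (fun t : ℝ => (NormedSpace.exp ((t : ℂ) • X) * g) i j) ((X * g) i j) 0 := by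
  let L0 : Matrix (Fin 2) (Fin 2) ℂ →ₗ[ℂ] ℂ :=
    { toFun := fun M => M i j, map_add' := fun _ _ => rfl, map_smul' := fun _ _ => rfl }
  let L : Matrix (Fin 2) (Fin 2) ℂ →L[ℂ] ℂ := L0.toContinuousLinearMap
  have h1 : HasDerivAt (fun u : ℂ => NormedSpace.exp (u • X)) X 0 := by
    have := hasDerivAt_exp_smul_const (𝕂 := ℂ) X (0 : ℂ)
    simp only [zero_smul, NormedSpace.exp_zero, Matrix.one_mul] at this
    exact this
  have h2 : HasDerivAt (fun u : ℂ => NormedSpace.exp (u • X) * g) (X * g) 0 :=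
    h1.mul_const g
  have h3 : HasDerivAt (fun u : ℂ => (NormedSpace.exp (u • X) * g) i j) ((X * g) i j) 0 :=
    (L.hasFDerivAt.comp_hasDerivAt 0 h2 :)
  exact h3.comp_ofReal

lemma re_hasDerivAt {f : ℝ → ℂ} {f' : ℂ} {x : ℝ} (h : HasDerivAt f f' x) :
    HasDerivAt (fun t => (f t).re) f'.re x :=
  (Complex.reCLM.hasFDerivAt.comp_hasDerivAt x h :)

lemma im_hasDerivAt {f : ℝ → ℂ} {f' : ℂ} {x : ℝ} (h : HasDerivAt f f' x) :
    HasDerivAt (fun t => (f t).im) f'.im x :=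
  (Complex.imCLM.hasFDerivAt.comp_hasDerivAt x h :)

lemma deriv_IwaA (X g : Matrix (Fin 2) (Fin 2) ℂ)
    (h0 : 0 < Complex.normSq (g 1 0) + Complex.normSq (g 1 1)) :
    deriv (fun t : ℝ => IwaA (NormedSpace.exp ((t : ℂ) • X) * g)) 0 =
      -(2 * ((starRingEnd ℂ (g 1 0) * ((X * g) 1 0)
          + starRingEnd ℂ (g 1 1) * ((X * g) 1 1)).re)
        / (Complex.normSq (g 1 0) + Complex.normSq (g 1 1))) := by
  set c := g 1 0
  set d := g 1 1
  set c' := (X * g) 1 0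
  set d' := (X * g) 1 1
  have hc := entry_hasDerivAt X g 1 0
  have hd := entry_hasDerivAt X g 1 1
  have hN : HasDerivAt
      (fun t : ℝ => Complex.normSq ((NormedSpace.exp ((t : ℂ) • X) * g) 1 0)
        + Complex.normSq ((NormedSpace.exp ((t : ℂ) • X) * g) 1 1))
      (2 * (c.re * c'.re + c.im * c'.im) + 2 * (d.re * d'.re + d.im * d'.im)) 0 := by
    have h1 := ((re_hasDerivAt hc).mul (re_hasDerivAt hc)).add
        ((im_hasDerivAt hc).mul (im_hasDerivAt hc))
    have h2 := ((re_hasDerivAt hd).mul (re_hasDerivAt hd)).add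
        ((im_hasDerivAt hd).mul (im_hasDerivAt hd))
    have h3 := h1.add h2
    simp only [Complex.ofReal_zero, zero_smul, NormedSpace.exp_zero, Matrix.one_mul] at h3
    simp only [Complex.normSq_apply]
    exact h3.congr_deriv (by simp only [c, d, c', d']; ring)
  have hlog := (hN.log (by
    simp only [Complex.ofReal_zero, zero_smul, NormedSpace.exp_zero, Matrix.one_mul]
    exact ne_of_gt h0)).neg
  simp only [Complex.ofReal_zero, zero_smul, NormedSpace.exp_zero, Matrix.one_mul] at hlog
  have : (fun t : ℝ => IwaA (NormedSpace.exp ((t : ℂ) • X) * g))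
      = fun t : ℝ => -Real.log (Complex.normSq ((NormedSpace.exp ((t : ℂ) • X) * g) 1 0)
        + Complex.normSq ((NormedSpace.exp ((t : ℂ) • X) * g) 1 1)) := rfl
  rw [this]
  refine hlog.deriv.trans ?_
  simp only [Complex.add_re, Complex.mul_re, Complex.conj_re, Complex.conj_im]
  ring

end Aux

lemma Ac_mul_Ac_neg (t : ℝ) : Ac t * Ac (-t) = 1 := by
  ext i j
  fin_cases i <;> fin_cases j <;>
    simp [Ac, Matrix.mul_apply, Fin.sum_univ_two, ← Complex.exp_add] <;> ring_nf <;> simp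

lemma Ac_det (t : ℝ) : (Ac t).det = 1 := by
  simp [Ac, Matrix.det_fin_two_of, ← Complex.exp_add]

lemma key_identity (a b c d : ℂ) :
    (a * (starRingEnd ℂ) a + b * (starRingEnd ℂ) b)
        * (c * (starRingEnd ℂ) c + d * (starRingEnd ℂ) d)
      = (a*d - b*c) * (starRingEnd ℂ) (a*d - b*c)
        + (a * (starRingEnd ℂ) c + b * (starRingEnd ℂ) d)
            * (starRingEnd ℂ) (a * (starRingEnd ℂ) c + b * (starRingEnd ℂ) d) := by
  simp only [map_add, map_sub, _root_.map_mul, Complex.conj_conj]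
  ring

/-- `g ∈ A·SU(2)` iff for every `X ∈ su(2)` the derivative at `t = 0` of
`t ↦ A(exp(tX)·g)` vanishes. -/
theorem stmt_9 (g : Matrix (Fin 2) (Fin 2) ℂ) (hg : g.det = 1) :
    (∃ t : ℝ, ∃ k ∈ SU2, g = Ac t * k) ↔
      ∀ X : Matrix (Fin 2) (Fin 2) ℂ, X.conjTranspose = -X → X.trace = 0 →
        deriv (fun t : ℝ => IwaA (NormedSpace.exp ((t : ℂ) • X) * g)) 0 = 0 := by
  have hdet : g 0 0 * g 1 1 - g 0 1 * g 1 0 = 1 := by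
    rw [Matrix.det_fin_two] at hg; exact hg
  have hq : 0 < Complex.normSq (g 1 0) + Complex.normSq (g 1 1) := by
    rcases eq_or_ne (g 1 0) 0 with h10 | h10
    · have h11 : g 1 1 ≠ 0 := by
        intro h11
        rw [h10, h11] at hdet; simp at hdet
      have h2 := Complex.normSq_pos.mpr h11
      have h3 := Complex.normSq_nonneg (g 1 0)
      linarith
    · have h2 := Complex.normSq_pos.mpr h10
      have h3 := Complex.normSq_nonneg (g 1 1)
      linarith
  constructor
  · -- forward
    rintro ⟨t, k, ⟨hk1, hk2⟩, rfl⟩ X hX1 hX2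
    rw [deriv_IwaA X _ hq]
    -- w = 0
    have hkentry : k 0 0 * starRingEnd ℂ (k 1 0) + k 0 1 * starRingEnd ℂ (k 1 1) = 0 := by
      have := congrArg (fun M => M 0 1) hk1
      simpa [Matrix.mul_apply, Fin.sum_univ_two, Matrix.conjTranspose_apply] using this
    have e00 : (Ac t * k) 0 0 = (Real.exp (t/2) : ℂ) * k 0 0 := by
      simp [Ac, Matrix.mul_apply, Fin.sum_univ_two]
    have e01 : (Ac t * k) 0 1 = (Real.exp (t/2) : ℂ) * k 0 1 := by
      simp [Ac, Matrix.mul_apply, Fin.sum_univ_two]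
    have e10 : (Ac t * k) 1 0 = (Real.exp (-(t/2)) : ℂ) * k 1 0 := by
      simp [Ac, Matrix.mul_apply, Fin.sum_univ_two]
    have e11 : (Ac t * k) 1 1 = (Real.exp (-(t/2)) : ℂ) * k 1 1 := by
      simp [Ac, Matrix.mul_apply, Fin.sum_univ_two]
    have hw : starRingEnd ℂ ((Ac t * k) 1 0) * ((Ac t * k) 0 0)
        + starRingEnd ℂ ((Ac t * k) 1 1) * ((Ac t * k) 0 1) = 0 := by
      rw [e00, e01, e10, e11]
      simp only [_root_.map_mul, Complex.conj_ofReal]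
      linear_combination
        ((Real.exp (-(t/2)) : ℂ) * (Real.exp (t/2) : ℂ)) * hkentry
    -- expand the matrix entries
    have m10 : (X * (Ac t * k)) 1 0 = X 1 0 * (Ac t * k) 0 0 + X 1 1 * (Ac t * k) 1 0 := by
      simp [Matrix.mul_apply, Fin.sum_univ_two]
    have m11 : (X * (Ac t * k)) 1 1 = X 1 0 * (Ac t * k) 0 1 + X 1 1 * (Ac t * k) 1 1 := by
      simp [Matrix.mul_apply, Fin.sum_univ_two]
    have n1 : starRingEnd ℂ ((Ac t * k) 1 0) * ((Ac t * k) 1 0)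
        = (Complex.normSq ((Ac t * k) 1 0) : ℂ) := by
      rw [mul_comm, Complex.mul_conj]
    have n2 : starRingEnd ℂ ((Ac t * k) 1 1) * ((Ac t * k) 1 1)
        = (Complex.normSq ((Ac t * k) 1 1) : ℂ) := by
      rw [mul_comm, Complex.mul_conj]
    have hS : starRingEnd ℂ ((Ac t * k) 1 0) * ((X * (Ac t * k)) 1 0)
        + starRingEnd ℂ ((Ac t * k) 1 1) * ((X * (Ac t * k)) 1 1)
        = X 1 1 * ((Complex.normSq ((Ac t * k) 1 0) + Complex.normSq ((Ac t * k) 1 1) : ℝ) : ℂ) := by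
      rw [m10, m11]
      push_cast
      linear_combination X 1 0 * hw + X 1 1 * n1 + X 1 1 * n2
    have hX11 : (X 1 1).re = 0 := by
      have := congrArg (fun M => M 1 1) hX1
      simp only [Matrix.conjTranspose_apply, Matrix.neg_apply, Complex.star_def] at this
      have hre := congrArg Complex.re this
      simp only [Complex.conj_re, Complex.neg_re] at hre
      linarith
    rw [hS]
    simp [Complex.mul_re, hX11]
  · -- backward
    intro h
    set a := g 0 0 with ha
    set b := g 0 1 with hb
    set c := g 1 0 with hc
    set d := g 1 1 with hd
    -- extract w = 0 from the two test directions
    have extract : ∀ X : Matrix (Fin 2) (Fin 2) ℂ, X.conjTranspose = -X → X.trace = 0 →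
        (starRingEnd ℂ c * ((X * g) 1 0) + starRingEnd ℂ d * ((X * g) 1 1)).re = 0 := by
      intro X h1 h2
      have := h X h1 h2
      rw [deriv_IwaA X g hq] at this
      rw [neg_eq_zero, div_eq_zero_iff] at this
      rcases this with h' | h'
      · linarith
      · exact absurd h' (ne_of_gt hq)
    have skew1 : (!![(0:ℂ),1;-1,0]).conjTranspose = -(!![(0:ℂ),1;-1,0]) := by
      ext i j; fin_cases i <;> fin_cases j <;> simp [Matrix.conjTranspose_apply]
    have tr1 : (!![(0:ℂ),1;-1,0]).trace = 0 := by simp [Matrix.trace_fin_two]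
    have skew2 : (!![(0:ℂ),Complex.I;Complex.I,0]).conjTranspose
        = -(!![(0:ℂ),Complex.I;Complex.I,0]) := by
      ext i j; fin_cases i <;> fin_cases j <;> simp [Matrix.conjTranspose_apply]
    have tr2 : (!![(0:ℂ),Complex.I;Complex.I,0]).trace = 0 := by simp [Matrix.trace_fin_two]
    have E1 := extract _ skew1 tr1
    have E2 := extract _ skew2 tr2
    have m1 : (!![(0:ℂ),1;-1,0] * g) 1 0 = -a := by
      simp [Matrix.mul_apply, Fin.sum_univ_two, ha]
    have m2 : (!![(0:ℂ),1;-1,0] * g) 1 1 = -b := by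
      simp [Matrix.mul_apply, Fin.sum_univ_two, hb]
    have m3 : (!![(0:ℂ),Complex.I;Complex.I,0] * g) 1 0 = Complex.I * a := by
      simp [Matrix.mul_apply, Fin.sum_univ_two, ha]
    have m4 : (!![(0:ℂ),Complex.I;Complex.I,0] * g) 1 1 = Complex.I * b := by
      simp [Matrix.mul_apply, Fin.sum_univ_two, hb]
    rw [m1, m2] at E1
    rw [m3, m4] at E2
    set w : ℂ := starRingEnd ℂ c * a + starRingEnd ℂ d * b with hwdef
    have hw : w = 0 := by
      apply Complex.ext
      · have : (-(w)).re = 0 := by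
          rw [show -w = starRingEnd ℂ c * (-a) + starRingEnd ℂ d * (-b) by rw [hwdef]; ring]
          exact E1
        simpa using this
      · have : (Complex.I * w).re = 0 := by
          rw [show Complex.I * w
              = starRingEnd ℂ c * (Complex.I * a) + starRingEnd ℂ d * (Complex.I * b) by
            rw [hwdef]; ring]
          exact E2
        simp only [Complex.mul_re, Complex.I_re, Complex.I_im, zero_mul, one_mul,
          zero_sub, neg_eq_zero] at this
        simpa using this
    -- now construct the decomposition
    have hp : 0 < Complex.normSq a + Complex.normSq b := by
      rcases eq_or_ne a 0 with h00 | h00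
      · have h01 : b ≠ 0 := by
          intro h01
          rw [h00, h01] at hdet; simp at hdet
        have h2 := Complex.normSq_pos.mpr h01
        have h3 := Complex.normSq_nonneg a
        linarith
      · have h2 := Complex.normSq_pos.mpr h00
        have h3 := Complex.normSq_nonneg b
        linarith
    set p := Complex.normSq a + Complex.normSq b with hpdef
    set q := Complex.normSq c + Complex.normSq d with hqdef
    have hpq : p * q = 1 := by
      have hidC : ((p : ℂ)) * ((q : ℂ)) = 1 := by
        have e1 : (p : ℂ) = a * starRingEnd ℂ a + b * starRingEnd ℂ b := by
          rw [hpdef]; push_cast [← Complex.mul_conj]; ring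
        have e2 : (q : ℂ) = c * starRingEnd ℂ c + d * starRingEnd ℂ d := by
          rw [hqdef]; push_cast [← Complex.mul_conj]; ring
        have hv : a * starRingEnd ℂ c + b * starRingEnd ℂ d = 0 := by
          rw [hwdef] at hw; linear_combination hw
        rw [e1, e2, key_identity a b c d, hv, hdet]
        simp
      exact_mod_cast hidC
    refine ⟨Real.log p, Ac (-Real.log p) * g, ⟨?_, ?_⟩, ?_⟩
    · -- unitarity
      set t := Real.log p with htdef
      have hexp : Real.exp t = p := Real.exp_log hp
      have f0 : ∀ j, (Ac (-t) * g) 0 j = (Real.exp (-t/2) : ℂ) * g 0 j := by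
        intro j; simp [Ac, Matrix.mul_apply, Fin.sum_univ_two, neg_div]
      have f1 : ∀ j, (Ac (-t) * g) 1 j = (Real.exp (t/2) : ℂ) * g 1 j := by
        intro j; simp [Ac, Matrix.mul_apply, Fin.sum_univ_two, neg_div]
      have hee : (Real.exp (-t/2) : ℂ) * (Real.exp (-t/2) : ℂ) * (p : ℂ) = 1 := by
        rw [← Complex.ofReal_mul, ← Real.exp_add, ← Complex.ofReal_mul]
        rw [show -t/2 + -t/2 = -t by ring, Real.exp_neg, hexp]
        rw [inv_mul_cancel₀ (ne_of_gt hp)]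
        simp
      have hEE : (Real.exp (t/2) : ℂ) * (Real.exp (t/2) : ℂ) = (p : ℂ) := by
        rw [← Complex.ofReal_mul, ← Real.exp_add, show t/2 + t/2 = t by ring, hexp]
      have hcross : (Real.exp (-t/2) : ℂ) * (Real.exp (t/2) : ℂ) = 1 := by
        rw [← Complex.ofReal_mul, ← Real.exp_add, show -t/2 + t/2 = 0 by ring]
        simp
      have ca : a * starRingEnd ℂ a = (Complex.normSq a : ℂ) := Complex.mul_conj a
      have cb : b * starRingEnd ℂ b = (Complex.normSq b : ℂ) := Complex.mul_conj b
      have cc : c * starRingEnd ℂ c = (Complex.normSq c : ℂ) := Complex.mul_conj c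
      have cd : d * starRingEnd ℂ d = (Complex.normSq d : ℂ) := Complex.mul_conj d
      have hv : a * starRingEnd ℂ c + b * starRingEnd ℂ d = 0 := by
        rw [hwdef] at hw; linear_combination hw
      have hv' : c * starRingEnd ℂ a + d * starRingEnd ℂ b = 0 := by
        rw [hwdef] at hw
        have := congrArg (starRingEnd ℂ) hw
        simp only [map_add, _root_.map_mul, Complex.conj_conj, map_zero] at this
        linear_combination this
      have hpC : (p : ℂ) = (Complex.normSq a : ℂ) + (Complex.normSq b : ℂ) := by
        rw [hpdef]; push_cast; ring
      have hqC : (p : ℂ) * ((Complex.normSq c : ℂ) + (Complex.normSq d : ℂ)) = 1 := by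
        have : ((p * q : ℝ) : ℂ) = 1 := by rw [hpq]; simp
        rw [hqdef] at this; push_cast at this ⊢; linear_combination this
      ext i j
      fin_cases i <;> fin_cases j <;>
        simp only [Matrix.mul_apply, Matrix.conjTranspose_apply, Fin.sum_univ_two,
          f0, f1, Complex.star_def, _root_.map_mul, Complex.conj_ofReal, Matrix.one_apply,
          Fin.zero_eta, Fin.mk_one, ne_eq, zero_ne_one, not_false_eq_true,
          one_ne_zero, if_true, if_false]
      · linear_combination ((Real.exp (-t/2) : ℂ) * (Real.exp (-t/2) : ℂ)) * ca
          + ((Real.exp (-t/2) : ℂ) * (Real.exp (-t/2) : ℂ)) * cb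
          + hee - ((Real.exp (-t/2) : ℂ) * (Real.exp (-t/2) : ℂ)) * hpC
      · linear_combination ((Real.exp (-t/2) : ℂ) * (Real.exp (t/2) : ℂ)) * hv
      · linear_combination ((Real.exp (-t/2) : ℂ) * (Real.exp (t/2) : ℂ)) * hv'
      · linear_combination ((Real.exp (t/2) : ℂ) * (Real.exp (t/2) : ℂ)) * cc
          + ((Real.exp (t/2) : ℂ) * (Real.exp (t/2) : ℂ)) * cd
          + ((Complex.normSq c : ℂ) + (Complex.normSq d : ℂ)) * hEE + hqC
    · -- determinant
      rw [Matrix.det_mul, Ac_det, hg, one_mul]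
    · rw [← mul_assoc, Ac_mul_Ac_neg, one_mul]
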